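/- Suppose F preserves a probability measure μ, A_k are measurable sets with E_n = ∑_{j=0}^{n-1} μ(A_j) → ∞, and the SP property holds: there is C > 0 such that for all m < n, ∑_{i=m}^{n} ∑_{j=i+1}^{n} (μ(A_i ∩ F^{-(j-i)} A_j) − μ(A_i)μ(A_j)) ≤ C ∑_{i=m}^{n} μ(A_i). Then the strong Borel–Cantelli property holds: S_n(x)/E_n → 1 for μ-a.e. x, where S_n(x) = ∑_{j=0}^{n-1} 1_{A_j}(F^j x). -/

import Mathlib

open Filter MeasureTheory

lemma sbc_sum_split (g : ℕ → ℕ → ℝ) (N : ℕ) :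
    ∑ i ∈ Finset.range N, ∑ j ∈ Finset.range N, g i j
      = (∑ i ∈ Finset.range N, g i i)
        + ∑ i ∈ Finset.range N, ∑ j ∈ Finset.Ioo i N, (g i j + g j i) := by
  induction N with
  | zero => simp
  | succ N ih =>
    have hIoo : ∀ i, i < N → Finset.Ioo i (N + 1) = insert N (Finset.Ioo i N) := by
      intro i hi; ext j
      simp only [Finset.mem_Ioo, Finset.mem_insert]
      omega
    have hNN : Finset.Ioo N (N + 1) = ∅ := by
      ext j; simp only [Finset.mem_Ioo, Finset.notMem_empty, iff_false]; omega
    rw [Finset.sum_range_succ (f := fun i => ∑ j ∈ Finset.range (N+1), g i j),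
        Finset.sum_range_succ (f := fun i => g i i),
        Finset.sum_range_succ (f := fun i => ∑ j ∈ Finset.Ioo i (N+1), (g i j + g j i)),
        hNN]
    simp only [Finset.sum_empty, add_zero]
    have h1 : ∀ i ∈ Finset.range N, ∑ j ∈ Finset.range (N+1), g i j
        = ∑ j ∈ Finset.range N, g i j + g i N := fun i _ => Finset.sum_range_succ _ _
    rw [Finset.sum_congr rfl h1, Finset.sum_add_distrib, ih,
        Finset.sum_range_succ (f := fun j => g N j)]
    have h2 : ∀ i ∈ Finset.range N, ∑ j ∈ Finset.Ioo i (N+1), (g i j + g j i)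
        = (g i N + g N i) + ∑ j ∈ Finset.Ioo i N, (g i j + g j i) := by
      intro i hi
      rw [hIoo i (Finset.mem_range.mp hi), Finset.sum_insert (by simp)]
    rw [Finset.sum_congr rfl h2, Finset.sum_add_distrib, Finset.sum_add_distrib]
    ring

lemma sbc_var_bound {Ω : Type*} [MeasurableSpace Ω] (μ : Measure Ω) [IsProbabilityMeasure μ]
    (B : ℕ → Set Ω) (hB : ∀ j, MeasurableSet (B j)) (C : ℝ) (hC : 0 ≤ C) (N : ℕ)
    (hcross : ∑ i ∈ Finset.range N, ∑ j ∈ Finset.Ioo i N,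
        ((μ (B i ∩ B j)).toReal - (μ (B i)).toReal * (μ (B j)).toReal)
        ≤ C * ∑ i ∈ Finset.range N, (μ (B i)).toReal) :
    ∫ x, ((∑ j ∈ Finset.range N, (B j).indicator (fun _ => (1:ℝ)) x)
        - ∑ j ∈ Finset.range N, (μ (B j)).toReal)^2 ∂μ
      ≤ (1 + 2*C) * ∑ j ∈ Finset.range N, (μ (B j)).toReal := by
  set p : ℕ → ℝ := fun j => (μ (B j)).toReal with hp
  set c : ℝ := ∑ j ∈ Finset.range N, p j with hc
  set S : Ω → ℝ := fun x => ∑ j ∈ Finset.range N, (B j).indicator (fun _ => (1:ℝ)) x with hS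
  -- pointwise expansion
  have hsq : ∀ x, (S x - c)^2
      = (∑ i ∈ Finset.range N, ∑ j ∈ Finset.range N,
          (B i ∩ B j).indicator (fun _ => (1:ℝ)) x) - 2 * c * S x + c^2 := by
    intro x
    have hm : S x ^ 2 = ∑ i ∈ Finset.range N, ∑ j ∈ Finset.range N,
        (B i ∩ B j).indicator (fun _ => (1:ℝ)) x := by
      rw [sq, hS, Finset.sum_mul_sum]
      refine Finset.sum_congr rfl fun i _ => Finset.sum_congr rfl fun j _ => ?_
      rw [← Set.inter_indicator_mul]
      simp
    rw [← hm]; ring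
  -- integrability pieces
  have hintind : ∀ (s : Set Ω), MeasurableSet s →
      Integrable (fun x => s.indicator (fun _ => (1:ℝ)) x) μ :=
    fun s hs => (integrable_const (1:ℝ)).indicator hs
  have hintS : Integrable S μ :=
    integrable_finset_sum _ fun j _ => hintind _ (hB j)
  have hintD : Integrable (fun x => ∑ i ∈ Finset.range N, ∑ j ∈ Finset.range N,
      (B i ∩ B j).indicator (fun _ => (1:ℝ)) x) μ :=
    integrable_finset_sum _ fun i _ => integrable_finset_sum _ fun j _ =>
      hintind _ ((hB i).inter (hB j))
  -- integral computation
  have hintegS : ∫ x, S x ∂μ = c := by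
    rw [hS, integral_finset_sum _ fun j _ => hintind _ (hB j)]
    refine Finset.sum_congr rfl fun j _ => ?_
    rw [integral_indicator_const (1:ℝ) (hB j), smul_eq_mul, mul_one]; rfl
  have hintegD : ∫ x, (∑ i ∈ Finset.range N, ∑ j ∈ Finset.range N,
      (B i ∩ B j).indicator (fun _ => (1:ℝ)) x) ∂μ
      = ∑ i ∈ Finset.range N, ∑ j ∈ Finset.range N, (μ (B i ∩ B j)).toReal := by
    rw [integral_finset_sum _ fun i _ => integrable_finset_sum _ fun j _ =>
      hintind _ ((hB i).inter (hB j))]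
    refine Finset.sum_congr rfl fun i _ => ?_
    rw [integral_finset_sum _ fun j _ => hintind _ ((hB i).inter (hB j))]
    refine Finset.sum_congr rfl fun j _ => ?_
    rw [integral_indicator_const (1:ℝ) ((hB i).inter (hB j)), smul_eq_mul, mul_one]; rfl
  have hvar : ∫ x, (S x - c)^2 ∂μ
      = ∑ i ∈ Finset.range N, ∑ j ∈ Finset.range N,
          ((μ (B i ∩ B j)).toReal - p i * p j) := by
    calc ∫ x, (S x - c)^2 ∂μ
        = ∫ x, ((∑ i ∈ Finset.range N, ∑ j ∈ Finset.range N,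
            (B i ∩ B j).indicator (fun _ => (1:ℝ)) x) - 2 * c * S x + c^2) ∂μ := by
          exact integral_congr_ae (Filter.Eventually.of_forall hsq)
      _ = (∑ i ∈ Finset.range N, ∑ j ∈ Finset.range N, (μ (B i ∩ B j)).toReal)
            - 2 * c * c + c^2 := by
          have hI1 : Integrable (fun x => (∑ i ∈ Finset.range N, ∑ j ∈ Finset.range N,
              (B i ∩ B j).indicator (fun _ => (1:ℝ)) x) - 2 * c * S x) μ :=
            hintD.sub (hintS.const_mul _)
          rw [integral_add hI1 (integrable_const _),
            integral_sub hintD (hintS.const_mul _), integral_const_mul, hintegS, hintegD]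
          simp [measure_univ]
      _ = (∑ i ∈ Finset.range N, ∑ j ∈ Finset.range N, (μ (B i ∩ B j)).toReal)
            - ∑ i ∈ Finset.range N, ∑ j ∈ Finset.range N, p i * p j := by
          rw [← Finset.sum_mul_sum]
          ring
      _ = ∑ i ∈ Finset.range N, ∑ j ∈ Finset.range N,
            ((μ (B i ∩ B j)).toReal - p i * p j) := by
          rw [← Finset.sum_sub_distrib]
          exact Finset.sum_congr rfl fun i _ => (Finset.sum_sub_distrib _ _).symm
  rw [hvar, sbc_sum_split (fun i j => (μ (B i ∩ B j)).toReal - p i * p j) N]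
  have hdiag : ∑ i ∈ Finset.range N, ((μ (B i ∩ B i)).toReal - p i * p i)
      ≤ ∑ i ∈ Finset.range N, p i := by
    refine Finset.sum_le_sum fun i _ => ?_
    rw [Set.inter_self]
    have : 0 ≤ p i * p i := mul_self_nonneg _
    linarith
  have hoff : ∑ i ∈ Finset.range N, ∑ j ∈ Finset.Ioo i N,
      (((μ (B i ∩ B j)).toReal - p i * p j) + ((μ (B j ∩ B i)).toReal - p j * p i))
      ≤ 2 * C * c := by
    have heq : ∀ i ∈ Finset.range N, ∀ j ∈ Finset.Ioo i N,
        (((μ (B i ∩ B j)).toReal - p i * p j) + ((μ (B j ∩ B i)).toReal - p j * p i))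
        = 2 * ((μ (B i ∩ B j)).toReal - p i * p j) := by
      intro i _ j _
      rw [Set.inter_comm (B j) (B i)]
      ring
    calc ∑ i ∈ Finset.range N, ∑ j ∈ Finset.Ioo i N,
        (((μ (B i ∩ B j)).toReal - p i * p j) + ((μ (B j ∩ B i)).toReal - p j * p i))
        = 2 * ∑ i ∈ Finset.range N, ∑ j ∈ Finset.Ioo i N,
            ((μ (B i ∩ B j)).toReal - p i * p j) := by
          rw [Finset.mul_sum]
          exact Finset.sum_congr rfl fun i hi => by
            rw [Finset.mul_sum]
            exact Finset.sum_congr rfl fun j hj => heq i hi j hj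
      _ ≤ 2 * (C * c) := by
          have := hcross
          linarith
      _ = 2 * C * c := by ring
  have hc0 : 0 ≤ c := Finset.sum_nonneg fun j _ => ENNReal.toReal_nonneg
  calc (∑ i ∈ Finset.range N, ((μ (B i ∩ B i)).toReal - p i * p i))
        + ∑ i ∈ Finset.range N, ∑ j ∈ Finset.Ioo i N,
          (((μ (B i ∩ B j)).toReal - p i * p j) + ((μ (B j ∩ B i)).toReal - p j * p i))
      ≤ c + 2 * C * c := add_le_add hdiag hoff
    _ = (1 + 2*C) * c := by ring
/-- If `F` preserves the probability measure `μ`, `E_n = ∑_{j<n} μ(A_j) → ∞`, and the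
SP property holds, then the strong Borel–Cantelli property holds:
`S_n(x)/E_n → 1` for μ-a.e. `x`, where `S_n(x) = ∑_{j<n} 1_{A_j}(F^j x)`. -/
theorem stmt3 {Ω : Type*} [MeasurableSpace Ω] (μ : Measure Ω) [IsProbabilityMeasure μ]
    (F : Ω → Ω) (hF : MeasurePreserving F μ μ)
    (A : ℕ → Set Ω) (hA : ∀ k, MeasurableSet (A k))
    (E : ℕ → ℝ) (hE : ∀ n, E n = ∑ j ∈ Finset.range n, (μ (A j)).toReal)
    (hdiv : Tendsto E atTop atTop)
    (C : ℝ) (hC : 0 < C)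
    (hSP : ∀ m n : ℕ, m < n →
      ∑ i ∈ Finset.Icc m n, ∑ j ∈ Finset.Ioc i n,
        ((μ (A i ∩ F^[j - i] ⁻¹' A j)).toReal - (μ (A i)).toReal * (μ (A j)).toReal) ≤
        C * ∑ i ∈ Finset.Icc m n, (μ (A i)).toReal) :
    ∀ᵐ x ∂μ, Tendsto
      (fun n : ℕ =>
        (∑ j ∈ Finset.range n, Set.indicator (A j) (fun _ => (1 : ℝ)) (F^[j] x)) / E n)
      atTop (nhds 1) := by
  classical
  set B : ℕ → Set Ω := fun j => F^[j] ⁻¹' A j with hBdef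
  have hBm : ∀ j, MeasurableSet (B j) := fun j => (hF.iterate j).measurable (hA j)
  have hμB : ∀ j, μ (B j) = μ (A j) :=
    fun j => (hF.iterate j).measure_preimage (hA j).nullMeasurableSet
  set S : ℕ → Ω → ℝ := fun N x => ∑ j ∈ Finset.range N, (B j).indicator (fun _ => (1:ℝ)) x
    with hSdef
  have hE' : ∀ N, E N = ∑ j ∈ Finset.range N, (μ (B j)).toReal := by
    intro N; rw [hE]; exact Finset.sum_congr rfl fun j _ => by rw [hμB]
  -- basic properties of E
  have hE0 : E 0 = 0 := by simp [hE]
  have hEnonneg : ∀ n, 0 ≤ E n :=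
    fun n => (hE n).symm ▸ Finset.sum_nonneg fun j _ => ENNReal.toReal_nonneg
  have hEmono : Monotone E := by
    intro m n hmn
    rw [hE, hE]
    exact Finset.sum_le_sum_of_subset_of_nonneg
      (Finset.range_subset_range.mpr hmn) (fun j _ _ => ENNReal.toReal_nonneg)
  have hAle1 : ∀ j, (μ (A j)).toReal ≤ 1 := by
    intro j
    have := prob_le_one (μ := μ) (s := A j)
    simpa using ENNReal.toReal_mono (by simp) this
  have hEleN : ∀ n, E n ≤ (n : ℝ) := by
    intro n
    rw [hE]
    calc ∑ j ∈ Finset.range n, (μ (A j)).toReal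
        ≤ ∑ _j ∈ Finset.range n, (1:ℝ) := Finset.sum_le_sum fun j _ => hAle1 j
      _ = n := by simp
  have hEstep : ∀ n, E (n + 1) ≤ E n + 1 := by
    intro n
    rw [hE, hE, Finset.sum_range_succ]
    linarith [hAle1 n]
  -- the cross-correlation bound in terms of B
  have hcross : ∀ N : ℕ, ∑ i ∈ Finset.range N, ∑ j ∈ Finset.Ioo i N,
      ((μ (B i ∩ B j)).toReal - (μ (B i)).toReal * (μ (B j)).toReal)
      ≤ C * ∑ i ∈ Finset.range N, (μ (B i)).toReal := by
    intro N
    have hBij : ∀ i j : ℕ, i ≤ j → μ (B i ∩ B j) = μ (A i ∩ F^[j - i] ⁻¹' A j) := by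
      intro i j hij
      have hBj : B j = F^[i] ⁻¹' (F^[j - i] ⁻¹' A j) := by
        rw [hBdef]
        show F^[j] ⁻¹' A j = _
        rw [← Set.preimage_comp, ← Function.iterate_add F (j - i) i,
          Nat.sub_add_cancel hij]
      have hset : B i ∩ B j = F^[i] ⁻¹' (A i ∩ F^[j - i] ⁻¹' A j) := by
        rw [Set.preimage_inter, hBj]
      rw [hset]
      exact (hF.iterate i).measure_preimage
        ((hA i).inter ((hF.iterate (j - i)).measurable (hA j))).nullMeasurableSet
    rcases le_or_gt N 1 with hN | hN
    · have hempty : ∀ i ∈ Finset.range N, Finset.Ioo i N = ∅ := by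
        intro i hi
        have := Finset.mem_range.mp hi
        ext j; simp only [Finset.mem_Ioo, Finset.notMem_empty, iff_false]; omega
      rw [Finset.sum_congr rfl (fun i hi => by rw [hempty i hi, Finset.sum_empty])]
      simp only [Finset.sum_const_zero]
      exact mul_nonneg hC.le (Finset.sum_nonneg fun j _ => ENNReal.toReal_nonneg)
    · have h1 : Finset.range N = Finset.Icc 0 (N - 1) := by
        ext a; simp only [Finset.mem_range, Finset.mem_Icc]; omega
      have h2 : ∀ i : ℕ, Finset.Ioo i N = Finset.Ioc i (N - 1) := by
        intro i; ext a; simp only [Finset.mem_Ioo, Finset.mem_Ioc]; omega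
      calc ∑ i ∈ Finset.range N, ∑ j ∈ Finset.Ioo i N,
            ((μ (B i ∩ B j)).toReal - (μ (B i)).toReal * (μ (B j)).toReal)
          = ∑ i ∈ Finset.Icc 0 (N - 1), ∑ j ∈ Finset.Ioc i (N - 1),
            ((μ (A i ∩ F^[j - i] ⁻¹' A j)).toReal
              - (μ (A i)).toReal * (μ (A j)).toReal) := by
            rw [← h1]
            refine Finset.sum_congr rfl fun i _ => ?_
            rw [← h2]
            refine Finset.sum_congr rfl fun j hj => ?_
            have hij : i < j := (Finset.mem_Ioo.mp hj).1
            rw [hBij i j hij.le, hμB i, hμB j]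
        _ ≤ C * ∑ i ∈ Finset.Icc 0 (N - 1), (μ (A i)).toReal := hSP 0 (N - 1) (by omega)
        _ = C * ∑ i ∈ Finset.range N, (μ (B i)).toReal := by
            rw [← h1]
            congr 1
            exact Finset.sum_congr rfl fun i _ => by rw [hμB]
  -- variance bound
  have hvar : ∀ N, ∫ x, (S N x - E N)^2 ∂μ ≤ (1 + 2*C) * E N := by
    intro N
    rw [hE' N]
    exact sbc_var_bound μ B hBm C hC.le N (hcross N)
  -- measurability and integrability of (S N - c)^2
  have hSmeas : ∀ N, Measurable (S N) := by
    intro N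
    exact Finset.measurable_sum _ fun j _ => (measurable_const.indicator (hBm j))
  have hSnonneg : ∀ N x, 0 ≤ S N x :=
    fun N x => Finset.sum_nonneg fun j _ => Set.indicator_nonneg (fun _ _ => zero_le_one) x
  have hSleN : ∀ N x, S N x ≤ (N : ℝ) := by
    intro N x
    calc S N x ≤ ∑ _j ∈ Finset.range N, (1:ℝ) :=
          Finset.sum_le_sum fun j _ => by
            by_cases h : x ∈ B j <;> simp [Set.indicator_apply, h]
      _ = N := by simp
  have hSmono : ∀ x ⦃m n : ℕ⦄, m ≤ n → S m x ≤ S n x := by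
    intro x m n hmn
    exact Finset.sum_le_sum_of_subset_of_nonneg (Finset.range_subset_range.mpr hmn)
      (fun j _ _ => Set.indicator_nonneg (fun _ _ => zero_le_one) x)
  have hsqint : ∀ (N : ℕ) (c : ℝ), Integrable (fun x => (S N x - c)^2) μ := by
    intro N c
    refine Integrable.mono' (integrable_const (((N:ℝ) + |c|)^2))
      (((hSmeas N).sub measurable_const).pow_const 2).aestronglyMeasurable
      (Filter.Eventually.of_forall fun x => ?_)
    have h1 : |S N x - c| ≤ (N : ℝ) + |c| := by
      have := hSnonneg N x
      have := hSleN N x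
      rw [abs_sub_comm]
      calc |c - S N x| ≤ |c| + |S N x| := abs_sub _ _
        _ ≤ |c| + N := by rw [abs_of_nonneg (hSnonneg N x)]; linarith
        _ = N + |c| := by ring
    have h2 : (0:ℝ) ≤ (N : ℝ) + |c| := le_trans (abs_nonneg _) h1
    rw [Real.norm_eq_abs, abs_of_nonneg (sq_nonneg _)]
    calc (S N x - c)^2 = |S N x - c|^2 := (sq_abs _).symm
      _ ≤ ((N:ℝ) + |c|)^2 := by nlinarith [abs_nonneg (S N x - c)]
  -- the subsequence
  have hex : ∀ k : ℕ, ∃ n, ((k:ℝ))^2 ≤ E n := fun k => (hdiv.eventually_ge_atTop _).exists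
  set ν : ℕ → ℕ := fun k => Nat.find (hex k) with hνdef
  have hνspec : ∀ k : ℕ, ((k:ℝ))^2 ≤ E (ν k) := fun k => Nat.find_spec (hex k)
  have hνmono : Monotone ν := by
    refine monotone_nat_of_le_succ fun k => ?_
    refine Nat.find_min' (hex k) ?_
    refine le_trans ?_ (hνspec (k+1))
    have : (k:ℝ) ≤ (k:ℝ) + 1 := by linarith
    push_cast
    nlinarith [Nat.cast_nonneg (α := ℝ) k]
  have hν0 : ν 0 = 0 := by
    have : ν 0 ≤ 0 := Nat.find_min' (hex 0) (by simp [hE0])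
    omega
  have hνub : ∀ k : ℕ, 1 ≤ k → E (ν k) ≤ (k:ℝ)^2 + 1 := by
    intro k hk
    have hν1 : ν k ≠ 0 := by
      intro h0
      have h1 := hνspec k
      rw [h0, hE0] at h1
      have : (1:ℝ) ≤ (k:ℝ) := by exact_mod_cast hk
      nlinarith
    obtain ⟨m, hm⟩ : ∃ m, ν k = m + 1 := ⟨ν k - 1, by omega⟩
    have hlt : E m < (k:ℝ)^2 :=
      not_le.mp (Nat.find_min (hex k) (by omega : m < ν k))
    calc E (ν k) = E (m + 1) := by rw [hm]
      _ ≤ E m + 1 := hEstep m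
      _ ≤ (k:ℝ)^2 + 1 := by linarith
  have hkk : ∀ k : ℕ, k ≤ ν k := by
    intro k
    rcases Nat.eq_zero_or_pos k with hk0 | hk0
    · simp [hk0]
    · have h2 : ((k:ℝ))^2 ≤ (ν k : ℝ) := le_trans (hνspec k) (hEleN (ν k))
      have h3 : (1:ℝ) ≤ (k:ℝ) := by exact_mod_cast hk0
      have h4 : (k:ℝ) ≤ (ν k : ℝ) := by nlinarith
      exact_mod_cast h4
  have hνpos : ∀ k : ℕ, 1 ≤ k → 0 < E (ν k) := by
    intro k hk
    have : (1:ℝ) ≤ (k:ℝ) := by exact_mod_cast hk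
    have := hνspec k
    nlinarith
  -- a.e. convergence along the subsequence
  have hae1 : ∀ᵐ x ∂μ, Tendsto (fun k => S (ν k) x / E (ν k)) atTop (nhds 1) := by
    set D : ℕ → Ω → ℝ :=
      fun k x => ((S (ν (k+1)) x - E (ν (k+1))) / E (ν (k+1)))^2 with hDdef
    have hDnonneg : ∀ k x, 0 ≤ D k x := fun k x => sq_nonneg _
    have hDmeas : ∀ k, Measurable (D k) := by
      intro k
      exact (((hSmeas _).sub measurable_const).div_const _).pow_const 2
    have hDeq : ∀ k, D k = fun x => (S (ν (k+1)) x - E (ν (k+1)))^2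
        * (1 / (E (ν (k+1)))^2) := by
      intro k
      funext x
      simp only [hDdef]
      rw [div_pow]
      ring
    have hDint : ∀ k, Integrable (D k) μ := by
      intro k
      rw [hDeq k]
      exact (hsqint _ _).mul_const _
    have hDbound : ∀ k, ∫ x, D k x ∂μ ≤ (1 + 2*C) / ((k:ℝ)+1)^2 := by
      intro k
      have hc : 0 < E (ν (k+1)) := hνpos (k+1) (by omega)
      have hk1 : (0:ℝ) < ((k:ℝ)+1)^2 := by positivity
      have hck : ((k:ℝ)+1)^2 ≤ E (ν (k+1)) := by
        have := hνspec (k+1); push_cast at this ⊢; linarith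
      have h12C : (0:ℝ) < 1 + 2*C := by linarith
      calc ∫ x, D k x ∂μ
          = (∫ x, (S (ν (k+1)) x - E (ν (k+1)))^2 ∂μ) * (1 / (E (ν (k+1)))^2) := by
            rw [hDeq k, integral_mul_const]
        _ ≤ ((1 + 2*C) * E (ν (k+1))) * (1 / (E (ν (k+1)))^2) :=
            mul_le_mul_of_nonneg_right (hvar _) (by positivity)
        _ = (1 + 2*C) / E (ν (k+1)) := by field_simp
        _ ≤ (1 + 2*C) / ((k:ℝ)+1)^2 := by
            exact div_le_div_of_nonneg_left h12C.le hk1 hck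
    -- summability of the bounds
    have hsum : Summable (fun k : ℕ => (1 + 2*C) / ((k:ℝ)+1)^2) := by
      have h2 : Summable (fun n : ℕ => 1/((n:ℝ))^2) :=
        Real.summable_one_div_nat_pow.mpr (by norm_num)
      have h3 : Summable (fun n : ℕ => 1/((n:ℝ)+1)^2) := by
        have := (summable_nat_add_iff 1).mpr h2
        refine this.congr fun n => ?_
        push_cast
        ring
      have h4 := h3.mul_left (1 + 2*C)
      refine h4.congr fun n => ?_
      rw [mul_one_div]
    have hlint : ∫⁻ x, ∑' k, ENNReal.ofReal (D k x) ∂μ ≠ ⊤ := by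
      rw [lintegral_tsum fun k => ((hDmeas k).ennreal_ofReal).aemeasurable]
      have hle : ∑' k : ℕ, ∫⁻ x, ENNReal.ofReal (D k x) ∂μ
          ≤ ∑' k : ℕ, ENNReal.ofReal ((1 + 2*C) / ((k:ℝ)+1)^2) := by
        refine ENNReal.tsum_le_tsum fun k => ?_
        rw [← ofReal_integral_eq_lintegral_ofReal (hDint k)
          (Filter.Eventually.of_forall (hDnonneg k))]
        exact ENNReal.ofReal_le_ofReal (hDbound k)
      refine ne_top_of_le_ne_top ?_ hle
      rw [← ENNReal.ofReal_tsum_of_nonneg (fun k => by positivity) hsum]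
      exact ENNReal.ofReal_ne_top
    have hfin : ∀ᵐ x ∂μ, ∑' k, ENNReal.ofReal (D k x) < ⊤ :=
      ae_lt_top (Measurable.ennreal_tsum fun k => (hDmeas k).ennreal_ofReal) hlint
    filter_upwards [hfin] with x hx
    have htend0 : Tendsto (fun k => D k x) atTop (nhds 0) := by
      have h1 : Tendsto (fun k => ENNReal.ofReal (D k x)) atTop (nhds 0) :=
        ENNReal.tendsto_atTop_zero_of_tsum_ne_top hx.ne
      have h2 : Tendsto (fun k => (ENNReal.ofReal (D k x)).toReal) atTop (nhds 0) := by
        have := (ENNReal.tendsto_toReal (by simp)).comp h1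
        simpa [Function.comp_def] using this
      refine h2.congr fun k => ?_
      rw [ENNReal.toReal_ofReal (hDnonneg k x)]
    -- from D → 0 deduce ratio → 1 along k+1
    have habs : Tendsto (fun k => |S (ν (k+1)) x / E (ν (k+1)) - 1|) atTop (nhds 0) := by
      have hsqrt : Tendsto (fun k => Real.sqrt (D k x)) atTop (nhds 0) := by
        have := (Real.continuous_sqrt.tendsto 0).comp htend0
        simpa [Function.comp_def] using this
      refine hsqrt.congr fun k => ?_
      have hc : E (ν (k+1)) ≠ 0 := (hνpos (k+1) (by omega)).ne'
      simp only [hDdef]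
      rw [Real.sqrt_sq_eq_abs]
      congr 1
      rw [div_sub' hc]
      congr 1
      ring
    have h1 : Tendsto (fun k => S (ν (k+1)) x / E (ν (k+1)) - 1) atTop (nhds 0) :=
      tendsto_zero_iff_abs_tendsto_zero _ |>.mpr habs
    have h2 : Tendsto (fun k => S (ν (k+1)) x / E (ν (k+1))) atTop (nhds 1) := by
      have := h1.add (tendsto_const_nhds (x := (1:ℝ)))
      simpa using this
    exact (tendsto_add_atTop_iff_nat 1).mp h2
  -- ratio of consecutive subsequence values of E tends to 1
  have hR : Tendsto (fun k => E (ν (k+1)) / E (ν k)) atTop (nhds 1) := by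
    have hub : Tendsto (fun k : ℕ => (((k:ℝ)+1)^2 + 1) / (k:ℝ)^2) atTop (nhds 1) := by
      have hA : Tendsto (fun k : ℕ => 2/(k:ℝ)) atTop (nhds 0) :=
        tendsto_const_div_atTop_nhds_zero_nat 2
      have hB2 : Tendsto (fun k : ℕ => 2/(k:ℝ) * (1/(k:ℝ))) atTop (nhds 0) := by
        have := hA.mul (tendsto_const_div_atTop_nhds_zero_nat 1)
        simpa using this
      have hsum : Tendsto (fun k : ℕ => 1 + 2/(k:ℝ) + 2/(k:ℝ) * (1/(k:ℝ)))
          atTop (nhds 1) := by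
        have := (tendsto_const_nhds (x := (1:ℝ)) (f := atTop)).add hA |>.add hB2
        simpa using this
      refine Tendsto.congr' ?_ hsum
      filter_upwards [eventually_ge_atTop 1] with k hk
      have hk0 : (k:ℝ) ≠ 0 := by
        have : (1:ℝ) ≤ (k:ℝ) := by exact_mod_cast hk
        linarith
      field_simp
      ring
    refine tendsto_of_tendsto_of_tendsto_of_le_of_le' tendsto_const_nhds hub ?_ ?_
    · filter_upwards [eventually_ge_atTop 1] with k hk
      have h1 : 0 < E (ν k) := hνpos k hk
      have h2 : E (ν k) ≤ E (ν (k+1)) := hEmono (hνmono (by omega))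
      rw [le_div_iff₀ h1]
      linarith
    · filter_upwards [eventually_ge_atTop 1] with k hk
      have h1 : 0 < E (ν k) := hνpos k hk
      have hk2 : (0:ℝ) < (k:ℝ)^2 := by
        have : (1:ℝ) ≤ (k:ℝ) := by exact_mod_cast hk
        positivity
      refine div_le_div₀ (by positivity) ?_ hk2 (hνspec k)
      have := hνub (k+1) (by omega)
      push_cast at this ⊢
      linarith
  have hRinv : Tendsto (fun k => E (ν k) / E (ν (k+1))) atTop (nhds 1) := by
    have := hR.inv₀ one_ne_zero
    simp only [inv_one] at this
    refine this.congr fun k => ?_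
    rw [inv_div]
  -- the interpolation function κ
  set κ : ℕ → ℕ := fun n => Nat.findGreatest (fun k => ν k ≤ n) n with hκdef
  have hκspec : ∀ n, ν (κ n) ≤ n :=
    fun n => Nat.findGreatest_spec (P := fun k => ν k ≤ n) (Nat.zero_le n) (by simp [hν0])
  have hκlt : ∀ n, n < ν (κ n + 1) := by
    intro n
    by_contra h'
    push_neg at h'
    rcases le_or_gt (κ n + 1) n with h1 | h1
    · exact Nat.findGreatest_is_greatest (Nat.lt_succ_self _) h1 h'
    · have h2 : κ n ≤ n := Nat.findGreatest_le n
      have h3 : κ n = n := by omega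
      have h4 := hkk (n + 1)
      rw [h3] at h'
      omega
  have hκtop : Tendsto κ atTop atTop := by
    refine tendsto_atTop_atTop.mpr fun k => ⟨max k (ν k), fun n hn => ?_⟩
    exact Nat.le_findGreatest (le_trans (le_max_left _ _) hn)
      (le_trans (le_max_right _ _) hn)
  -- final step
  filter_upwards [hae1] with x hx
  have hgoal : Tendsto (fun n => S n x / E n) atTop (nhds 1) := by
    set u : ℕ → ℝ := fun n =>
      (S (ν (κ n + 1)) x / E (ν (κ n + 1))) * (E (ν (κ n + 1)) / E (ν (κ n))) with hudef
    set l : ℕ → ℝ := fun n =>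
      (S (ν (κ n)) x / E (ν (κ n))) * (E (ν (κ n)) / E (ν (κ n + 1))) with hldef
    have hxshift : Tendsto (fun k => S (ν (k+1)) x / E (ν (k+1))) atTop (nhds 1) :=
      (tendsto_add_atTop_iff_nat 1).mpr hx
    have hu : Tendsto u atTop (nhds 1) := by
      have h1 : Tendsto (fun k => (S (ν (k+1)) x / E (ν (k+1))) * (E (ν (k+1)) / E (ν k)))
          atTop (nhds 1) := by
        have := hxshift.mul hR
        simpa using this
      exact h1.comp hκtop
    have hl : Tendsto l atTop (nhds 1) := by
      have h1 : Tendsto (fun k => (S (ν k) x / E (ν k)) * (E (ν k) / E (ν (k+1))))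
          atTop (nhds 1) := by
        have := hx.mul hRinv
        simpa using this
      exact h1.comp hκtop
    refine tendsto_of_tendsto_of_tendsto_of_le_of_le' hl hu ?_ ?_
    · filter_upwards [hκtop.eventually_ge_atTop 1] with n hn
      have h0 : 0 < E (ν (κ n)) := hνpos _ hn
      have h1 : 0 < E (ν (κ n + 1)) := hνpos _ (by omega)
      have hEn : E (ν (κ n)) ≤ E n := hEmono (hκspec n)
      have hEn' : E n ≤ E (ν (κ n + 1)) := hEmono (le_of_lt (hκlt n))
      have hEnpos : 0 < E n := lt_of_lt_of_le h0 hEn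
      have hle : l n = S (ν (κ n)) x / E (ν (κ n + 1)) := by
        simp only [hldef]
        rw [div_mul_div_comm, mul_comm (S (ν (κ n)) x) (E (ν (κ n))),
          mul_div_mul_left _ _ h0.ne']
      rw [hle]
      exact div_le_div₀ (hSnonneg n x) (hSmono x (hκspec n)) hEnpos hEn'
    · filter_upwards [hκtop.eventually_ge_atTop 1] with n hn
      have h0 : 0 < E (ν (κ n)) := hνpos _ hn
      have h1 : 0 < E (ν (κ n + 1)) := hνpos _ (by omega)
      have hEn : E (ν (κ n)) ≤ E n := hEmono (hκspec n)
      have hEn' : E n ≤ E (ν (κ n + 1)) := hEmono (le_of_lt (hκlt n))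
      have hue : u n = S (ν (κ n + 1)) x / E (ν (κ n)) := by
        simp only [hudef]
        rw [div_mul_div_comm, mul_comm (S (ν (κ n + 1)) x) (E (ν (κ n + 1))),
          mul_div_mul_left _ _ h1.ne']
      rw [hue]
      exact div_le_div₀ (hSnonneg _ x) (hSmono x (le_of_lt (hκlt n))) h0 hEn
  refine hgoal.congr fun n => ?_
  have : ∀ j, (A j).indicator (fun _ => (1:ℝ)) (F^[j] x)
      = (B j).indicator (fun _ => (1:ℝ)) x := by
    intro j
    simp only [Set.indicator_apply, hBdef, Set.mem_preimage]
  rw [Finset.sum_congr rfl fun j _ => this j]
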